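/- Let g be an M♮-convex function with finite nonempty effective domain and let b : E → {0,1}. Assume k̲ + 2 ≤ k̄ and let k ∈ {k̲+2, …, k̄}. Let x_k ∈ 𝒯_k, let (u_k, v_k) be a minimum transition with respect to x_k, set x_{k−1} := x_k − χ_{u_k} + χ_{v_k}, and let (u_{k−1}, v_{k−1}) be a minimum transition with respect to x_{k−1}. Then g(x_k; u_k, v_k) ≤ g(x_{k−1}; u_{k−1}, v_{k−1}). -/

import Mathlib

open scoped BigOperators

/-- Characteristic vector of a singleton `{u}`. -/
def chiv {E : Type*} [DecidableEq E] (u : E) : E → ℤ := fun e => if e = u then 1 else 0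

/-- Characteristic vector allowing the dummy symbol `z` (modelled as `none`), with `χ_z = 0`. -/
def chiOpt {E : Type*} [DecidableEq E] (v : Option E) : E → ℤ :=
  fun e => match v with
  | none => 0
  | some w => chiv w e

/-- M♮-convexity (with nonempty effective domain) for `g : (E → ℤ) → ℝ ∪ {+∞}`. -/
def MnatConvex {E : Type*} [DecidableEq E] (g : (E → ℤ) → WithTop ℝ) : Prop :=
  (∃ x, g x < ⊤) ∧
  ∀ x y : E → ℤ, g x < ⊤ → g y < ⊤ → ∀ u : E, y u < x u →
    (g (x - chiv u) + g (y + chiv u) ≤ g x + g y) ∨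
    (∃ v : E, x v < y v ∧
      g (x - chiv u + chiv v) + g (y + chiv u - chiv v) ≤ g x + g y)

/-- `⟨b,x⟩ = ∑ e, b e * x e`. -/
def innerb {E : Type*} [Fintype E] (b : E → ℤ) (x : E → ℤ) : ℤ := ∑ e, b e * x e

/-- `𝒯_i`: the minimizers of `g` on `𝒫_i = {x ∈ dom g : ⟨b,x⟩ = i}`. -/
def Tset {E : Type*} [Fintype E] (g : (E → ℤ) → WithTop ℝ) (b : E → ℤ) (i : ℤ) :
    Set (E → ℤ) :=
  {x | g x < ⊤ ∧ innerb b x = i ∧ ∀ y : E → ℤ, g y < ⊤ → innerb b y = i → g x ≤ g y}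

/-- A transition `(u,v)` with respect to `x`: `u ∈ E₁`, `v ∈ E₀ ∪ {z}`, and
`x - χ_u + χ_v ∈ dom g`. -/
def IsTransition {E : Type*} [DecidableEq E] (g : (E → ℤ) → WithTop ℝ) (b : E → ℤ)
    (x : E → ℤ) (u : E) (v : Option E) : Prop :=
  b u = 1 ∧ (∀ w : E, v = some w → b w = 0) ∧ g (x - chiv u + chiOpt v) < ⊤

/-- The cost `g(x;u,v) = g(x - χ_u + χ_v) - g(x)` of a transition (as a real number;
both values are finite for transitions with respect to `x ∈ dom g`). -/
noncomputable def transCost {E : Type*} [DecidableEq E] (g : (E → ℤ) → WithTop ℝ)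
    (x : E → ℤ) (u : E) (v : Option E) : ℝ :=
  (g (x - chiv u + chiOpt v)).untopD 0 - (g x).untopD 0

/-- A minimum transition with respect to `x`. -/
def IsMinTransition {E : Type*} [Fintype E] [DecidableEq E] (g : (E → ℤ) → WithTop ℝ)
    (b : E → ℤ) (x : E → ℤ) (u : E) (v : Option E) : Prop :=
  IsTransition g b x u v ∧
    ∀ (u' : E) (v' : Option E), IsTransition g b x u' v' →
      transCost g x u v ≤ transCost g x u' v'

lemma chiOpt_none {E : Type*} [DecidableEq E] : chiOpt (none : Option E) = 0 := rfl

lemma chiOpt_some {E : Type*} [DecidableEq E] (w : E) : chiOpt (some w) = chiv w := rfl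

lemma untop'_le {a c : WithTop ℝ} (hc : c ≠ ⊤) (h : a ≤ c) :
    a.untopD 0 ≤ c.untopD 0 := by
  lift c to ℝ using hc
  have ha : a ≠ ⊤ := ne_top_of_le_ne_top (WithTop.coe_ne_top) h
  lift a to ℝ using ha
  exact_mod_cast h

lemma quad {a b c d : WithTop ℝ} (hc : c ≠ ⊤) (hd : d ≠ ⊤)
    (h : a + b ≤ c + d) :
    a ≠ ⊤ ∧ b ≠ ⊤ ∧ a.untopD 0 + b.untopD 0 ≤ c.untopD 0 + d.untopD 0 := by
  lift c to ℝ using hc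
  lift d to ℝ using hd
  have hab : a + b ≠ ⊤ := by
    refine ne_top_of_le_ne_top ?_ h
    exact_mod_cast (WithTop.coe_ne_top (a := c + d))
  have ha : a ≠ ⊤ := fun h' => hab (by simp [h'])
  have hb : b ≠ ⊤ := fun h' => hab (by simp [h'])
  lift a to ℝ using ha
  lift b to ℝ using hb
  refine ⟨WithTop.coe_ne_top, WithTop.coe_ne_top, ?_⟩
  exact_mod_cast h

lemma innerb_add_chiv {E : Type*} [Fintype E] [DecidableEq E] (b x : E → ℤ) (u : E) :
    innerb b (x + chiv u) = innerb b x + b u := by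
  unfold innerb chiv
  simp [mul_add, Finset.sum_add_distrib, mul_ite]

lemma innerb_sub_chiv {E : Type*} [Fintype E] [DecidableEq E] (b x : E → ℤ) (u : E) :
    innerb b (x - chiv u) = innerb b x - b u := by
  unfold innerb chiv
  simp [mul_sub, Finset.sum_sub_distrib, mul_ite]

lemma innerb_target {E : Type*} [Fintype E] [DecidableEq E] (b x : E → ℤ) (u : E)
    (v : Option E) (hv : ∀ w, v = some w → b w = 0) :
    innerb b (x - chiv u + chiOpt v) = innerb b x - b u := by
  cases v with
  | none =>
      rw [chiOpt_none, add_zero, innerb_sub_chiv]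
  | some w =>
      rw [chiOpt_some, innerb_add_chiv, innerb_sub_chiv, hv w rfl, add_zero]

lemma exists_exch {E : Type*} [Fintype E] (b : E → ℤ) (hb : ∀ e, b e = 0 ∨ b e = 1)
    (x y : E → ℤ) (h : innerb b y < innerb b x) : ∃ u, b u = 1 ∧ y u < x u := by
  by_contra hc
  push_neg at hc
  have key : ∑ e, b e * (x e - y e) ≤ 0 := by
    apply Finset.sum_nonpos
    intro e _
    rcases hb e with h0 | h1
    · simp [h0]
    · have := hc e h1
      nlinarith
  have heq : innerb b x - innerb b y = ∑ e, b e * (x e - y e) := by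
    unfold innerb
    rw [← Finset.sum_sub_distrib]
    exact Finset.sum_congr rfl fun e _ => by ring
  omega

lemma dist_dec {E : Type*} [Fintype E] [DecidableEq E] (x y : E → ℤ) (u v : E)
    (hu : y u < x u) (hv : x v < y v) :
    ∑ e, (x e - (y + chiv u - chiv v) e).natAbs < ∑ e, (x e - y e).natAbs := by
  have hne : u ≠ v := fun h => by rw [h] at hu; omega
  apply Finset.sum_lt_sum
  · intro e _
    by_cases heu : e = u
    · subst heu
      simp only [Pi.sub_apply, Pi.add_apply, chiv, if_pos rfl, if_true, if_neg hne]
      omega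
    · by_cases hev : e = v
      · subst hev
        simp only [Pi.sub_apply, Pi.add_apply, chiv, if_pos rfl, if_true, if_neg heu]
        omega
      · simp only [Pi.sub_apply, Pi.add_apply, chiv, if_neg heu, if_neg hev]
        omega
  · refine ⟨u, Finset.mem_univ u, ?_⟩
    simp only [Pi.sub_apply, Pi.add_apply, chiv, if_pos rfl, if_true, if_neg hne]
    omega

/-- costs of successive minimum transitions are non-decreasing as `k`
decreases: `g(x_k; u_k, v_k) ≤ g(x_{k-1}; u_{k-1}, v_{k-1})`. -/
theorem stmt_5 {E : Type*} [Fintype E] [DecidableEq E] [Nonempty E]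
    (g : (E → ℤ) → WithTop ℝ) (b : E → ℤ)
    (hg : MnatConvex g)
    (hfin : {x : E → ℤ | g x < ⊤}.Finite)
    (hb : ∀ e : E, b e = 0 ∨ b e = 1)
    (kmin kmax : ℤ)
    (hkmin : (Tset g b kmin).Nonempty ∧ ∀ k : ℤ, (Tset g b k).Nonempty → kmin ≤ k)
    (hkmax : (Tset g b kmax).Nonempty ∧ ∀ k : ℤ, (Tset g b k).Nonempty → k ≤ kmax)
    (hgap : kmin + 2 ≤ kmax)
    (k : ℤ) (hk1 : kmin + 2 ≤ k) (hk2 : k ≤ kmax)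
    (xk : E → ℤ) (hxk : xk ∈ Tset g b k)
    (uk : E) (vk : Option E) (hmink : IsMinTransition g b xk uk vk)
    (xkm1 : E → ℤ) (hxkm1 : xkm1 = xk - chiv uk + chiOpt vk)
    (ukm1 : E) (vkm1 : Option E) (hminkm1 : IsMinTransition g b xkm1 ukm1 vkm1) :
    transCost g xk uk vk ≤ transCost g xkm1 ukm1 vkm1 := by
  classical
  obtain ⟨⟨huk1, hvk0, hgt⟩, hminPk⟩ := hmink
  obtain ⟨⟨hukm1_1, hvkm1_0, hgtm1⟩, _⟩ := hminkm1
  obtain ⟨hgxk, hlevxk, hminxk⟩ := hxk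
  have hgxkm1 : g xkm1 < ⊤ := hxkm1 ▸ hgt
  have hlevxkm1 : innerb b xkm1 = k - 1 := by
    rw [hxkm1, innerb_target b xk uk vk hvk0, huk1, hlevxk]
  -- the minimum-transition property, in real-number form
  have hmin' : ∀ (u' : E) (v' : Option E), IsTransition g b xk u' v' →
      (g xkm1).untopD 0 ≤ (g (xk - chiv u' + chiOpt v')).untopD 0 := by
    intro u' v' ht
    have h := hminPk u' v' ht
    unfold transCost at h
    rw [← hxkm1] at h
    linarith
  -- Lemma A : every point of dom g at level (k-1) has value ≥ g(xkm1)
  have lemA : ∀ (n : ℕ) (y : E → ℤ), (∑ e, (xk e - y e).natAbs) = n →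
      g y < ⊤ → innerb b y = k - 1 →
      (g xkm1).untopD 0 ≤ (g y).untopD 0 := by
    intro n
    induction n using Nat.strong_induction_on with
    | _ n IH =>
      intro y hdist hy hlev
      obtain ⟨u, hu1, huxy⟩ := exists_exch b hb xk y (by omega)
      rcases hg.2 xk y hgxk hy u huxy with h | ⟨v, hvxy, h⟩
      · -- case (i) : split off a unit of u
        obtain ⟨hfa, hfb, hre⟩ := quad (ne_of_lt hgxk) (ne_of_lt hy) h
        have heq0 : xk - chiv u + chiOpt (none : Option E) = xk - chiv u := by
          rw [chiOpt_none, add_zero]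
        have htr : IsTransition g b xk u none := by
          refine ⟨hu1, ?_, ?_⟩
          · intro w hw; cases hw
          · rw [heq0]; exact lt_top_iff_ne_top.mpr hfa
        have h1 := hmin' u none htr
        rw [heq0] at h1
        have hyu_lev : innerb b (y + chiv u) = k := by
          rw [innerb_add_chiv, hlev, hu1]; ring
        have h2 : (g xk).untopD 0 ≤ (g (y + chiv u)).untopD 0 :=
          untop'_le hfb (hminxk _ (lt_top_iff_ne_top.mpr hfb) hyu_lev)
        linarith
      · obtain ⟨hfa, hfb, hre⟩ := quad (ne_of_lt hgxk) (ne_of_lt hy) h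
        rcases hb v with hv0 | hv1
        · -- exchange along (u, some v), v ∈ E₀
          have heqs : xk - chiv u + chiOpt (some v) = xk - chiv u + chiv v := by
            rw [chiOpt_some]
          have htr : IsTransition g b xk u (some v) := by
            refine ⟨hu1, ?_, ?_⟩
            · intro w hw; cases hw; exact hv0
            · rw [heqs]; exact lt_top_iff_ne_top.mpr hfa
          have h1 := hmin' u (some v) htr
          rw [heqs] at h1
          have hlev2 : innerb b (y + chiv u - chiv v) = k := by
            rw [innerb_sub_chiv, innerb_add_chiv, hlev, hu1, hv0]; ring
          have h2 : (g xk).untopD 0 ≤ (g (y + chiv u - chiv v)).untopD 0 :=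
            untop'_le hfb (hminxk _ (lt_top_iff_ne_top.mpr hfb) hlev2)
          linarith
        · -- v ∈ E₁ : move y closer to xk and recurse
          have hlev1 : innerb b (xk - chiv u + chiv v) = k := by
            rw [innerb_add_chiv, innerb_sub_chiv, hlevxk, hu1, hv1]; ring
          have h1 : (g xk).untopD 0 ≤ (g (xk - chiv u + chiv v)).untopD 0 :=
            untop'_le hfa (hminxk _ (lt_top_iff_ne_top.mpr hfa) hlev1)
          have hlev2 : innerb b (y + chiv u - chiv v) = k - 1 := by
            rw [innerb_sub_chiv, innerb_add_chiv, hlev, hu1, hv1]; ring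
          have hdd := dist_dec xk y u v huxy hvxy
          rw [hdist] at hdd
          have h2 := IH _ hdd (y + chiv u - chiv v) rfl
            (lt_top_iff_ne_top.mpr hfb) hlev2
          linarith
  -- Lemma B : every point of dom g at level (k-2) satisfies 2 g(xkm1) ≤ g(xk) + g(y)
  have lemB : ∀ (n : ℕ) (y : E → ℤ), (∑ e, (xk e - y e).natAbs) = n →
      g y < ⊤ → innerb b y = k - 2 →
      (g xkm1).untopD 0 + (g xkm1).untopD 0 ≤ (g xk).untopD 0 + (g y).untopD 0 := by
    intro n
    induction n using Nat.strong_induction_on with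
    | _ n IH =>
      intro y hdist hy hlev
      obtain ⟨u, hu1, huxy⟩ := exists_exch b hb xk y (by omega)
      rcases hg.2 xk y hgxk hy u huxy with h | ⟨v, hvxy, h⟩
      · obtain ⟨hfa, hfb, hre⟩ := quad (ne_of_lt hgxk) (ne_of_lt hy) h
        have heq0 : xk - chiv u + chiOpt (none : Option E) = xk - chiv u := by
          rw [chiOpt_none, add_zero]
        have htr : IsTransition g b xk u none := by
          refine ⟨hu1, ?_, ?_⟩
          · intro w hw; cases hw
          · rw [heq0]; exact lt_top_iff_ne_top.mpr hfa
        have h1 := hmin' u none htr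
        rw [heq0] at h1
        have hyu_lev : innerb b (y + chiv u) = k - 1 := by
          rw [innerb_add_chiv, hlev, hu1]; ring
        have h2 := lemA _ (y + chiv u) rfl (lt_top_iff_ne_top.mpr hfb) hyu_lev
        linarith
      · obtain ⟨hfa, hfb, hre⟩ := quad (ne_of_lt hgxk) (ne_of_lt hy) h
        rcases hb v with hv0 | hv1
        · have heqs : xk - chiv u + chiOpt (some v) = xk - chiv u + chiv v := by
            rw [chiOpt_some]
          have htr : IsTransition g b xk u (some v) := by
            refine ⟨hu1, ?_, ?_⟩
            · intro w hw; cases hw; exact hv0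
            · rw [heqs]; exact lt_top_iff_ne_top.mpr hfa
          have h1 := hmin' u (some v) htr
          rw [heqs] at h1
          have hlev2 : innerb b (y + chiv u - chiv v) = k - 1 := by
            rw [innerb_sub_chiv, innerb_add_chiv, hlev, hu1, hv0]; ring
          have h2 := lemA _ (y + chiv u - chiv v) rfl
            (lt_top_iff_ne_top.mpr hfb) hlev2
          linarith
        · have hlev1 : innerb b (xk - chiv u + chiv v) = k := by
            rw [innerb_add_chiv, innerb_sub_chiv, hlevxk, hu1, hv1]; ring
          have h1 : (g xk).untopD 0 ≤ (g (xk - chiv u + chiv v)).untopD 0 :=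
            untop'_le hfa (hminxk _ (lt_top_iff_ne_top.mpr hfa) hlev1)
          have hlev2 : innerb b (y + chiv u - chiv v) = k - 2 := by
            rw [innerb_sub_chiv, innerb_add_chiv, hlev, hu1, hv1]; ring
          have hdd := dist_dec xk y u v huxy hvxy
          rw [hdist] at hdd
          have h2 := IH _ hdd (y + chiv u - chiv v) rfl
            (lt_top_iff_ne_top.mpr hfb) hlev2
          linarith
  -- conclude
  have hylev : innerb b (xkm1 - chiv ukm1 + chiOpt vkm1) = k - 2 := by
    rw [innerb_target b xkm1 ukm1 vkm1 hvkm1_0, hukm1_1, hlevxkm1]; ring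
  have hB := lemB _ (xkm1 - chiv ukm1 + chiOpt vkm1) rfl hgtm1 hylev
  unfold transCost
  rw [← hxkm1]
  linarith
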